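/- arXiv:2310.07946 — 2 statements merged into one kernel-verified Lean document; each statement's English description precedes it below -/
import Mathlib

section
/- Define σ_x^± from the spin operators and a_x = e^{iπf_x}σ_x^−, a_x* = e^{−iπf_x}σ_x^+ for a family of real functions f_x ∈ C(Ω_{Λ∖{x}}). If for all x ≠ y the functions satisfy f_y^{g_x} − f_x − f_y + f_x^{g_y} ∈ 2ℤ + 1 (where f^g(σ) = f(gσ) and g_x is the spin flip at x), then the operators a_x satisfy the canonical anticommutation relations: {a_x*, a_y} = δ_{x,y}𝟙 and {a_x, a_y} = 0 for all x, y. -/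
open Function
open scoped Classical

namespace SpinFlipGroupoid

/-- The spin-flip group ⊕_x {±1}. -/
def GFlip (ι : Type*) : Subgroup (ι → ℤˣ) where
  carrier := {g | (Function.mulSupport g).Finite}
  one_mem' := by simp [Function.mulSupport_one]
  mul_mem' := by
    intro a b ha hb
    exact (ha.union hb).subset (Function.mulSupport_mul a b)
  inv_mem' := by
    intro a ha
    simpa [Function.mulSupport_inv] using ha

variable {ι : Type*}

/-- The coordinatewise spin-flip action. -/
def act (g : GFlip ι) (σ : ι → ℤˣ) : ι → ℤˣ := fun y => (g : ι → ℤˣ) y * σ y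

/-- The convolution product on the groupoid Ω ⋊ G. -/
noncomputable def conv (f₁ f₂ : (ι → ℤˣ) × GFlip ι → ℂ) : (ι → ℤˣ) × GFlip ι → ℂ :=
  fun p => ∑ᶠ h : GFlip ι, f₁ (act (h⁻¹ * p.2) p.1, h) * f₂ (p.1, h⁻¹ * p.2)

/-- The identity 𝟙 of the convolution algebra. -/
noncomputable def one : (ι → ℤˣ) × GFlip ι → ℂ := fun p => if p.2 = 1 then 1 else 0

/-- Extension of a classical function to the groupoid. -/
noncomputable def ext (F : (ι → ℤˣ) → ℂ) : (ι → ℤˣ) × GFlip ι → ℂ :=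
  fun p => F p.1 * (if p.2 = 1 then 1 else 0)

/-- The spin flip at site x. -/
noncomputable def flip (x : ι) : GFlip ι :=
  ⟨fun y => if y = x then -1 else 1, by
    show (Function.mulSupport _).Finite
    refine Set.Finite.subset (Set.finite_singleton x) ?_
    intro y hy
    simp only [Function.mem_mulSupport, ne_eq] at hy
    by_contra hxy
    simp only [Set.mem_singleton_iff] at hxy
    exact hy (if_neg hxy)⟩

/-- σ_x^{(1)}(σ,g) = [g = flip at x]. -/
noncomputable def s1 (x : ι) : (ι → ℤˣ) × GFlip ι → ℂ :=
  fun p => if p.2 = flip x then 1 else 0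

/-- The raising operator σ_x^+ = 𝟙_{σ_x = −1}·σ_x^{(1)}. -/
noncomputable def sxp (x : ι) : (ι → ℤˣ) × GFlip ι → ℂ :=
  conv (ext fun σ => if σ x = -1 then 1 else 0) (s1 x)

/-- The lowering operator σ_x^− = 𝟙_{σ_x = +1}·σ_x^{(1)}. -/
noncomputable def sxm (x : ι) : (ι → ℤˣ) × GFlip ι → ℂ :=
  conv (ext fun σ => if σ x = 1 then 1 else 0) (s1 x)

/-- The annihilation operator a_x = e^{iπ f_x} σ_x^−. -/
noncomputable def ann (f : ι → ((ι → ℤˣ) → ℝ)) (x : ι) : (ι → ℤˣ) × GFlip ι → ℂ :=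
  conv (ext fun σ => Complex.exp (Complex.I * Real.pi * (f x σ))) (sxm x)

/-- The creation operator a_x* = e^{−iπ f_x} σ_x^+. -/
noncomputable def cre (f : ι → ((ι → ℤˣ) → ℝ)) (x : ι) : (ι → ℤˣ) × GFlip ι → ℂ :=
  conv (ext fun σ => Complex.exp (-(Complex.I * Real.pi * (f x σ)))) (sxp x)

-- ==== auxiliary lemmas ====

lemma flip_coe (x y : ι) : ((flip x : GFlip ι) : ι → ℤˣ) y = if y = x then -1 else 1 := rfl

lemma flip_mul_self (x : ι) : (flip x : GFlip ι) * flip x = 1 := by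
  apply Subtype.ext
  funext y
  show ((flip x : GFlip ι) : ι → ℤˣ) y * ((flip x : GFlip ι) : ι → ℤˣ) y = 1
  rw [flip_coe]
  by_cases h : y = x <;> simp [h]

lemma flip_inv (x : ι) : (flip x : GFlip ι)⁻¹ = flip x :=
  inv_eq_of_mul_eq_one_right (flip_mul_self x)

lemma act_one (σ : ι → ℤˣ) : act (1 : GFlip ι) σ = σ := by
  funext y
  show ((1 : GFlip ι) : ι → ℤˣ) y * σ y = σ y
  simp

lemma act_mul (g h : GFlip ι) (σ : ι → ℤˣ) : act (g * h) σ = act g (act h σ) := by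
  funext y
  show ((g : ι → ℤˣ) * (h : ι → ℤˣ)) y * σ y = (g : ι → ℤˣ) y * ((h : ι → ℤˣ) y * σ y)
  simp [Pi.mul_apply, mul_assoc]

lemma act_flip_self (x : ι) (σ : ι → ℤˣ) : act (flip x) σ x = -σ x := by
  show ((flip x : GFlip ι) : ι → ℤˣ) x * σ x = -σ x
  simp [flip_coe]

lemma act_flip_ne {x y : ι} (h : y ≠ x) (σ : ι → ℤˣ) : act (flip x) σ y = σ y := by
  show ((flip x : GFlip ι) : ι → ℤˣ) y * σ y = σ y
  simp [flip_coe, h]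

lemma act_flip_flip (x : ι) (σ : ι → ℤˣ) : act (flip x) (act (flip x) σ) = σ := by
  rw [← act_mul, flip_mul_self, act_one]

lemma conv_delta (g₁ g₂ : GFlip ι) (A B : (ι → ℤˣ) → ℂ) (p : (ι → ℤˣ) × GFlip ι) :
    conv (fun q => if q.2 = g₁ then A q.1 else 0) (fun q => if q.2 = g₂ then B q.1 else 0) p
      = if p.2 = g₁ * g₂ then A (act g₂ p.1) * B p.1 else 0 := by
  unfold conv
  rw [finsum_eq_single _ g₁ (by intro h hne; simp [hne])]
  simp only [if_pos rfl]
  by_cases hc : g₁⁻¹ * p.2 = g₂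
  · have hp : p.2 = g₁ * g₂ := by rw [← hc, mul_inv_cancel_left]
    rw [if_pos hc, if_pos hp, hc]
    simp
  · have hp : p.2 ≠ g₁ * g₂ := by
      intro h; exact hc (by rw [h, inv_mul_cancel_left])
    rw [if_neg hc, if_neg hp, mul_zero]

lemma conv_ext (F : (ι → ℤˣ) → ℂ) (G : (ι → ℤˣ) × GFlip ι → ℂ) (p : (ι → ℤˣ) × GFlip ι) :
    conv (ext F) G p = F (act p.2 p.1) * G p := by
  unfold conv ext
  rw [finsum_eq_single _ 1 (by intro h hne; simp [hne])]
  simp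

lemma sxm_eq (x : ι) (p : (ι → ℤˣ) × GFlip ι) :
    sxm x p = if p.2 = flip x then (if p.1 x = -1 then 1 else 0) else 0 := by
  obtain ⟨σ, g⟩ := p
  rw [sxm, conv_ext]
  unfold s1
  by_cases hp : g = flip x
  · subst hp
    rw [if_pos rfl, if_pos rfl, act_flip_self]
    rcases Int.units_eq_one_or (σ x) with h | h <;> simp [h]
  · simp [hp]

lemma sxp_eq (x : ι) (p : (ι → ℤˣ) × GFlip ι) :
    sxp x p = if p.2 = flip x then (if p.1 x = 1 then 1 else 0) else 0 := by
  obtain ⟨σ, g⟩ := p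
  rw [sxp, conv_ext]
  unfold s1
  by_cases hp : g = flip x
  · subst hp
    rw [if_pos rfl, if_pos rfl, act_flip_self]
    rcases Int.units_eq_one_or (σ x) with h | h <;> simp [h]
  · simp [hp]

lemma ann_eq (f : ι → ((ι → ℤˣ) → ℝ)) (x : ι) (p : (ι → ℤˣ) × GFlip ι) :
    ann f x p = if p.2 = flip x then
      (if p.1 x = -1 then Complex.exp (Complex.I * Real.pi * (f x (act (flip x) p.1))) else 0)
      else 0 := by
  obtain ⟨σ, g⟩ := p
  rw [ann, conv_ext, sxm_eq]
  by_cases hp : g = flip x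
  · subst hp
    by_cases h : σ x = -1 <;> simp [h]
  · simp [hp]

lemma cre_eq (f : ι → ((ι → ℤˣ) → ℝ)) (x : ι) (p : (ι → ℤˣ) × GFlip ι) :
    cre f x p = if p.2 = flip x then
      (if p.1 x = 1 then Complex.exp (-(Complex.I * Real.pi * (f x (act (flip x) p.1)))) else 0)
      else 0 := by
  obtain ⟨σ, g⟩ := p
  rw [cre, conv_ext, sxp_eq]
  by_cases hp : g = flip x
  · subst hp
    by_cases h : σ x = 1 <;> simp [h]
  · simp [hp]


lemma exp_cancel (z : ℂ) : Complex.exp (-z) * Complex.exp z = 1 := by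
  rw [← Complex.exp_add]; simp

lemma exp_cancel' (z : ℂ) : Complex.exp z * Complex.exp (-z) = 1 := by
  rw [← Complex.exp_add]; simp

lemma exp_neg_mul (s t : ℝ) :
    Complex.exp (-(Complex.I * Real.pi * s)) * Complex.exp (Complex.I * Real.pi * t)
      = Complex.exp (Complex.I * Real.pi * ((t - s : ℝ) : ℝ)) := by
  rw [← Complex.exp_add]
  push_cast
  ring_nf

lemma exp_mul_neg (s t : ℝ) :
    Complex.exp (Complex.I * Real.pi * s) * Complex.exp (-(Complex.I * Real.pi * t))
      = Complex.exp (Complex.I * Real.pi * ((s - t : ℝ) : ℝ)) := by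
  rw [← Complex.exp_add]
  push_cast
  ring_nf

lemma exp_mul_exp (s t : ℝ) :
    Complex.exp (Complex.I * Real.pi * s) * Complex.exp (Complex.I * Real.pi * t)
      = Complex.exp (Complex.I * Real.pi * ((s + t : ℝ) : ℝ)) := by
  rw [← Complex.exp_add]
  push_cast
  ring_nf

lemma exp_odd_add (a b : ℝ) (m : ℤ) (h : b - a = 2 * m + 1) :
    Complex.exp (Complex.I * Real.pi * a) + Complex.exp (Complex.I * Real.pi * b) = 0 := by
  have hb : (Complex.I * Real.pi * b : ℂ)
      = Complex.I * Real.pi * a + ((m : ℂ) * (2 * Real.pi * Complex.I) + Real.pi * Complex.I) := by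
    have h1 : ((b : ℂ)) = (a : ℂ) + (2 * (m : ℂ) + 1) := by
      have h2 : ((b - a : ℝ) : ℂ) = ((2 * (m : ℝ) + 1 : ℝ) : ℂ) := by
        norm_cast
        exact_mod_cast h
      push_cast at h2
      linear_combination h2
    rw [h1]; ring
  rw [hb, Complex.exp_add, Complex.exp_add, Complex.exp_int_mul_two_pi_mul_I,
    Complex.exp_pi_mul_I]
  ring

noncomputable def dAnn (f : ι → ((ι → ℤˣ) → ℝ)) (x : ι) : (ι → ℤˣ) → ℂ :=
  fun σ => if σ x = -1 then Complex.exp (Complex.I * Real.pi * (f x σ)) else 0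

noncomputable def dCre (f : ι → ((ι → ℤˣ) → ℝ)) (x : ι) : (ι → ℤˣ) → ℂ :=
  fun σ => if σ x = 1 then Complex.exp (-(Complex.I * Real.pi * (f x σ))) else 0


/-- If each f_x does not depend on the spin at x and the family satisfies the
Jordan–Wigner condition f_y^{g_x} − f_x − f_y + f_x^{g_y} ∈ 2ℤ+1 (x ≠ y), then
the operators a_x = e^{iπf_x}σ_x^−, a_x* = e^{−iπf_x}σ_x^+ satisfy the CAR:
{a_x*, a_y} = δ_{x,y}𝟙 and {a_x, a_y} = 0. -/
theorem jordan_wigner_CAR (f : ι → ((ι → ℤˣ) → ℝ))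
    (hindep : ∀ (x : ι) (σ τ : ι → ℤˣ), (∀ y, y ≠ x → σ y = τ y) → f x σ = f x τ)
    (hJW : ∀ x y : ι, x ≠ y → ∀ σ : ι → ℤˣ, ∃ m : ℤ,
      f y (act (flip x) σ) - f x σ - f y σ + f x (act (flip y) σ) = 2 * m + 1) :
    ∀ x y : ι,
      conv (cre f x) (ann f y) + conv (ann f y) (cre f x) =
        (if x = y then one else 0) ∧
      conv (ann f x) (ann f y) + conv (ann f y) (ann f x) = 0 := by
  have hflip : ∀ (x : ι) (σ : ι → ℤˣ), f x (act (flip x) σ) = f x σ := fun x σ =>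
    hindep x _ _ (fun y hy => act_flip_ne hy σ)
  have annfun : ∀ y, ann f y = fun q : (ι → ℤˣ) × GFlip ι =>
      if q.2 = flip y then dAnn f y q.1 else 0 := by
    intro y; funext q; rw [ann_eq, hflip]; rfl
  have crefun : ∀ x, cre f x = fun q : (ι → ℤˣ) × GFlip ι =>
      if q.2 = flip x then dCre f x q.1 else 0 := by
    intro x; funext q; rw [cre_eq, hflip]; rfl
  intro x y
  constructor
  · by_cases hxy : x = y
    · subst hxy
      rw [if_pos rfl]
      funext p
      obtain ⟨σ, g⟩ := p
      rw [crefun, annfun]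
      simp only [Pi.add_apply]
      rw [conv_delta, conv_delta, flip_mul_self]
      simp only [dAnn, dCre]
      show _ = one (σ, g)
      unfold one
      by_cases hg : g = 1
      · rw [if_pos hg, if_pos hg, if_pos hg]
        rcases Int.units_eq_one_or (σ x) with h | h <;>
          simp [h, act_flip_self, hflip, exp_cancel, exp_cancel']
      · simp [hg]
    · rw [if_neg hxy]
      funext p
      obtain ⟨σ, g⟩ := p
      rw [crefun, annfun]
      simp only [Pi.add_apply, Pi.zero_apply]
      rw [conv_delta, conv_delta, mul_comm (flip y) (flip x)]
      simp only [dAnn, dCre]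
      by_cases hg : g = flip x * flip y
      · rw [if_pos hg, if_pos hg]
        rw [act_flip_ne hxy, act_flip_ne (Ne.symm hxy)]
        rcases Int.units_eq_one_or (σ x) with h1 | h1 <;>
          rcases Int.units_eq_one_or (σ y) with h2 | h2 <;>
          simp only [h1, h2, if_pos, if_neg, ite_true, ite_false]
        all_goals first
        | (simp; done)
        | ((try simp only [if_true])
           rw [exp_neg_mul, exp_mul_neg]
           obtain ⟨m, hm⟩ := hJW x y hxy σ
           exact exp_odd_add _ _ m (by linarith))
      · simp [hg]
  · by_cases hxy : x = y
    · subst hxy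
      funext p
      obtain ⟨σ, g⟩ := p
      rw [annfun]
      simp only [Pi.add_apply, Pi.zero_apply]
      rw [conv_delta]
      simp only [dAnn]
      by_cases hg : g = flip x * flip x
      · rw [if_pos hg, act_flip_self]
        rcases Int.units_eq_one_or (σ x) with h | h <;> simp [h]
      · simp [hg]
    · funext p
      obtain ⟨σ, g⟩ := p
      rw [annfun x, annfun y]
      simp only [Pi.add_apply, Pi.zero_apply]
      rw [conv_delta, conv_delta, mul_comm (flip y) (flip x)]
      simp only [dAnn, dCre]
      by_cases hg : g = flip x * flip y
      · rw [if_pos hg, if_pos hg]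
        rw [act_flip_ne hxy, act_flip_ne (Ne.symm hxy)]
        rcases Int.units_eq_one_or (σ x) with h1 | h1 <;>
          rcases Int.units_eq_one_or (σ y) with h2 | h2 <;>
          simp only [h1, h2]
        all_goals first
        | (simp; done)
        | ((try simp only [if_true])
           rw [exp_mul_exp, exp_mul_exp]
           obtain ⟨m, hm⟩ := hJW x y hxy (act (flip y) σ)
           have e1 : f y (act (flip x) (act (flip y) σ)) = f y (act (flip x) σ) := by
             rw [← act_mul, mul_comm, act_mul, hflip]
           have e2 : f x (act (flip y) (act (flip y) σ)) = f x σ := by rw [act_flip_flip]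
           have e3 : f y (act (flip y) σ) = f y σ := hflip y σ
           rw [e1, e2, e3] at hm
           exact exp_odd_add _ _ m (by linarith))
      · simp [hg]


end SpinFlipGroupoid
end

section
/- Let φ be an interaction with ‖φ‖_λ < ∞ and let D^φ(f) = i Σ_{X∩Λ≠∅} [φ_X, f] for f localized in a finite set Λ. Then the iterated derivation satisfies ‖(D^φ)^n(f)‖ ≤ (2‖φ‖_λ/λ)^n · n! · e^{λ|Λ|} · ‖f‖ for all n ≥ 1; in particular the series Σ_n t^n (D^φ)^n(f)/n! has radius of convergence at least λ/(2‖φ‖_λ). -/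
namespace Interactions

variable {d : ℕ} {A : Type*} [NormedRing A] [StarRing A] [NormedAlgebra ℂ A]

/-- The coefficient sup_x Σ_{X∋x, |X|=n+1} ‖φ_X‖. -/
noncomputable def bnd (φ : Finset (Fin d → ℤ) → A) (n : ℕ) : ℝ :=
  ⨆ x : Fin d → ℤ, ∑' X : {X : Finset (Fin d → ℤ) // x ∈ X ∧ X.card = n + 1}, ‖φ X.1‖

/-- The interaction norm ‖φ‖_λ = Σ_{n≥0} e^{λn} sup_x Σ_{X∋x,|X|=n+1} ‖φ_X‖. -/
noncomputable def normL (lam : ℝ) (φ : Finset (Fin d → ℤ) → A) : ℝ :=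
  ∑' n : ℕ, Real.exp (lam * n) * bnd φ n

/-- The iterates of the derivation D^φ(f) = i Σ_X [φ_X, f]. -/
noncomputable def Diter (φ : Finset (Fin d → ℤ) → A) : ℕ → A → A
  | 0 => fun f => f
  | n + 1 => fun f =>
      Complex.I • ∑' X : Finset (Fin d → ℤ), (φ X * Diter φ n f - Diter φ n f * φ X)

open scoped ENNReal NNReal

/-- weight of a chain: product of ‖φ (Xs i)‖ with the chain condition as indicator. -/
noncomputable def chainW (φ : Finset (Fin d → ℤ) → A) :
    (n : ℕ) → Finset (Fin d → ℤ) → (Fin n → Finset (Fin d → ℤ)) → ℝ≥0∞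
  | 0, _, _ => 1
  | n+1, S, Xs =>
      (if ((Xs 0) ∩ S).Nonempty then (‖φ (Xs 0)‖₊ : ℝ≥0∞) else 0)
        * chainW φ n (S ∪ Xs 0) (Fin.tail Xs)

/-- The union S ∪ ⋃ᵢ Xs i. -/
def Uset : (n : ℕ) → Finset (Fin d → ℤ) → (Fin n → Finset (Fin d → ℤ)) → Finset (Fin d → ℤ)
  | 0, S, _ => S
  | n+1, S, Xs => Uset n (S ∪ Xs 0) (Fin.tail Xs)

lemma Uset_succ (n : ℕ) (S : Finset (Fin d → ℤ)) (Xs : Fin (n+1) → Finset (Fin d → ℤ)) :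
    Uset (n+1) S Xs = Uset n (S ∪ Xs 0) (Fin.tail Xs) := rfl

lemma chainW_succ (φ : Finset (Fin d → ℤ) → A) (n : ℕ) (S : Finset (Fin d → ℤ))
    (Xs : Fin (n+1) → Finset (Fin d → ℤ)) :
    chainW φ (n+1) S Xs = (if ((Xs 0) ∩ S).Nonempty then (‖φ (Xs 0)‖₊ : ℝ≥0∞) else 0)
        * chainW φ n (S ∪ Xs 0) (Fin.tail Xs) := rfl

lemma subset_Uset : ∀ (n : ℕ) (S : Finset (Fin d → ℤ)) (Xs : Fin n → Finset (Fin d → ℤ)),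
    S ⊆ Uset n S Xs
  | 0, _, _ => subset_rfl
  | n+1, S, Xs => Finset.Subset.trans Finset.subset_union_left (subset_Uset n _ _)

lemma snoc_zero₀ {β : Type*} (Xs : Fin 0 → β) (X : β) :
    (Fin.snoc Xs X : Fin 1 → β) 0 = X := by
  simp [Fin.snoc]

lemma snoc_zero_succ {β : Type*} {n : ℕ} (Xs : Fin (n+1) → β) (X : β) :
    (Fin.snoc Xs X : Fin (n+2) → β) 0 = Xs 0 := by
  have h : (0 : Fin (n+2)) = Fin.castSucc (0 : Fin (n+1)) := rfl
  rw [h, Fin.snoc_castSucc]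

lemma tail_snoc {β : Type*} {n : ℕ} (Xs : Fin (n+1) → β) (X : β) :
    (Fin.tail (Fin.snoc Xs X : Fin (n+2) → β)) = (Fin.snoc (Fin.tail Xs) X : Fin (n+1) → β) := by
  funext i
  induction i using Fin.lastCases with
  | last =>
      simp only [Fin.tail]
      rw [Fin.succ_last, Fin.snoc_last, Fin.snoc_last]
  | cast j =>
      simp only [Fin.tail]
      rw [Fin.succ_castSucc, Fin.snoc_castSucc, Fin.snoc_castSucc]
      rfl

lemma Uset_snoc : ∀ (n : ℕ) (S : Finset (Fin d → ℤ)) (Xs : Fin n → Finset (Fin d → ℤ))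
    (X : Finset (Fin d → ℤ)), Uset (n+1) S (Fin.snoc Xs X) = Uset n S Xs ∪ X
  | 0, S, Xs, X => by
    rw [Uset_succ, snoc_zero₀]
    rfl
  | n+1, S, Xs, X => by
    rw [Uset_succ, snoc_zero_succ, tail_snoc, Uset_snoc n, Uset_succ]

lemma chainW_snoc (φ : Finset (Fin d → ℤ) → A) :
    ∀ (n : ℕ) (S : Finset (Fin d → ℤ)) (Xs : Fin n → Finset (Fin d → ℤ))
    (X : Finset (Fin d → ℤ)),
    chainW φ (n+1) S (Fin.snoc Xs X)
      = chainW φ n S Xs *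
        (if (X ∩ Uset n S Xs).Nonempty then (‖φ X‖₊ : ℝ≥0∞) else 0)
  | 0, S, Xs, X => by
    rw [chainW_succ, snoc_zero₀]
    show _ * chainW φ 0 _ _ = chainW φ 0 _ _ * _
    rw [chainW]; rw [chainW]
    show (if (X ∩ S).Nonempty then (‖φ X‖₊ : ℝ≥0∞) else 0) * 1
      = 1 * (if (X ∩ Uset 0 S Xs).Nonempty then (‖φ X‖₊ : ℝ≥0∞) else 0)
    rw [one_mul, mul_one]
    rfl
  | n+1, S, Xs, X => by
    rw [chainW_succ, snoc_zero_succ, tail_snoc, chainW_snoc φ n, chainW_succ, Uset_succ,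
      mul_assoc]

lemma tsum_le_bnd (φ : Finset (Fin d → ℤ) → A)
    (hbdd : ∀ n : ℕ, BddAbove (Set.range fun x : Fin d → ℤ =>
      ∑' X : {X : Finset (Fin d → ℤ) // x ∈ X ∧ X.card = n + 1}, ‖φ X.1‖))
    (x : Fin d → ℤ) (m : ℕ) :
    ∑' X : {X : Finset (Fin d → ℤ) // x ∈ X ∧ X.card = m + 1}, ‖φ X.1‖ ≤ bnd φ m :=
  le_ciSup (hbdd m) x

lemma bnd_nonneg (φ : Finset (Fin d → ℤ) → A)
    (hbdd : ∀ n : ℕ, BddAbove (Set.range fun x : Fin d → ℤ =>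
      ∑' X : {X : Finset (Fin d → ℤ) // x ∈ X ∧ X.card = n + 1}, ‖φ X.1‖))
    (m : ℕ) : 0 ≤ bnd φ m := by
  refine le_trans ?_ (tsum_le_bnd φ hbdd (fun _ => 0) m)
  exact tsum_nonneg fun X => norm_nonneg _

lemma normL_nonneg (φ : Finset (Fin d → ℤ) → A) (lam : ℝ)
    (hbdd : ∀ n : ℕ, BddAbove (Set.range fun x : Fin d → ℤ =>
      ∑' X : {X : Finset (Fin d → ℤ) // x ∈ X ∧ X.card = n + 1}, ‖φ X.1‖)) :
    0 ≤ normL lam φ :=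
  tsum_nonneg fun m => mul_nonneg (Real.exp_pos _).le (bnd_nonneg φ hbdd m)

/-- Single site sum: over all X containing x, weighted by e^{λ(|X|-1)}. -/
lemma tsum_site_le (φ : Finset (Fin d → ℤ) → A) (lam : ℝ)
    (hsum : ∀ (x : Fin d → ℤ) (n : ℕ),
      Summable fun X : {X : Finset (Fin d → ℤ) // x ∈ X ∧ X.card = n + 1} => ‖φ X.1‖)
    (hbdd : ∀ n : ℕ, BddAbove (Set.range fun x : Fin d → ℤ =>
      ∑' X : {X : Finset (Fin d → ℤ) // x ∈ X ∧ X.card = n + 1}, ‖φ X.1‖))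
    (hnorm : Summable fun n : ℕ => Real.exp (lam * n) * bnd φ n)
    (x : Fin d → ℤ) :
    ∑' X : Finset (Fin d → ℤ),
      (if x ∈ X then (‖φ X‖₊ : ℝ≥0∞) * ENNReal.ofReal (Real.exp (lam * (X.card - 1 : ℕ))) else 0)
      ≤ ENNReal.ofReal (normL lam φ) := by
  classical
  have hsplit : ∀ X : Finset (Fin d → ℤ),
      (if x ∈ X then (‖φ X‖₊ : ℝ≥0∞) * ENNReal.ofReal (Real.exp (lam * (X.card - 1 : ℕ))) else 0)
      = ∑' m : ℕ, (if x ∈ X ∧ X.card = m + 1 then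
          (‖φ X‖₊ : ℝ≥0∞) * ENNReal.ofReal (Real.exp (lam * m)) else 0) := by
    intro X
    by_cases hx : x ∈ X
    · have hc : X.card ≠ 0 := by
        intro h
        rw [Finset.card_eq_zero] at h
        rw [h] at hx; exact absurd hx (Finset.notMem_empty x)
      have hm : X.card = (X.card - 1) + 1 := (Nat.succ_pred_eq_of_ne_zero hc).symm
      have hsingle := tsum_eq_single (L := SummationFilter.unconditional ℕ) (f := fun m : ℕ => (if x ∈ X ∧ X.card = m + 1 then
          (‖φ X‖₊ : ℝ≥0∞) * ENNReal.ofReal (Real.exp (lam * m)) else 0)) (X.card - 1)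
        (fun m hm' => by
          beta_reduce
          rw [if_neg]
          rintro ⟨-, hcard⟩
          exact hm' (by omega))
      rw [if_pos hx, hsingle]
      beta_reduce
      rw [if_pos ⟨hx, hm⟩]
    · rw [if_neg hx]
      exact ((ENNReal.tsum_eq_zero).mpr
        (fun m => by rw [if_neg (fun h => hx h.1)])).symm
  calc ∑' X : Finset (Fin d → ℤ), (if x ∈ X then (‖φ X‖₊ : ℝ≥0∞) *
          ENNReal.ofReal (Real.exp (lam * (X.card - 1 : ℕ))) else 0)
      = ∑' (X : Finset (Fin d → ℤ)) (m : ℕ), (if x ∈ X ∧ X.card = m + 1 then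
          (‖φ X‖₊ : ℝ≥0∞) * ENNReal.ofReal (Real.exp (lam * m)) else 0) := by
        exact tsum_congr hsplit
    _ = ∑' (m : ℕ) (X : Finset (Fin d → ℤ)), (if x ∈ X ∧ X.card = m + 1 then
          (‖φ X‖₊ : ℝ≥0∞) * ENNReal.ofReal (Real.exp (lam * m)) else 0) := ENNReal.tsum_comm
    _ ≤ ∑' m : ℕ, ENNReal.ofReal (Real.exp (lam * m) * bnd φ m) := by
        refine ENNReal.tsum_le_tsum fun m => ?_
        have h1 : ∀ X : Finset (Fin d → ℤ), (if x ∈ X ∧ X.card = m + 1 then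
            (‖φ X‖₊ : ℝ≥0∞) * ENNReal.ofReal (Real.exp (lam * m)) else 0)
            = ENNReal.ofReal (Real.exp (lam * m)) *
              (Set.indicator {X : Finset (Fin d → ℤ) | x ∈ X ∧ X.card = m + 1}
                (fun X => (‖φ X‖₊ : ℝ≥0∞)) X) := by
          intro X
          simp only [Set.indicator_apply, Set.mem_setOf_eq]
          by_cases h : x ∈ X ∧ X.card = m + 1
          · simp only [if_pos h, mul_comm]
          · simp only [if_neg h, mul_zero]
        calc ∑' X : Finset (Fin d → ℤ), (if x ∈ X ∧ X.card = m + 1 then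
              (‖φ X‖₊ : ℝ≥0∞) * ENNReal.ofReal (Real.exp (lam * m)) else 0)
            = ENNReal.ofReal (Real.exp (lam * m)) *
              ∑' X : Finset (Fin d → ℤ), Set.indicator
                {X : Finset (Fin d → ℤ) | x ∈ X ∧ X.card = m + 1}
                (fun X => (‖φ X‖₊ : ℝ≥0∞)) X := by
              rw [← ENNReal.tsum_mul_left]; exact tsum_congr h1
          _ = ENNReal.ofReal (Real.exp (lam * m)) *
              ∑' X : {X : Finset (Fin d → ℤ) // x ∈ X ∧ X.card = m + 1}, (‖φ X.1‖₊ : ℝ≥0∞) := by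
              rw [← tsum_subtype]
              rfl
          _ ≤ ENNReal.ofReal (Real.exp (lam * m)) * ENNReal.ofReal (bnd φ m) := by
              gcongr
              have heq : ∑' X : {X : Finset (Fin d → ℤ) // x ∈ X ∧ X.card = m + 1},
                  (‖φ X.1‖₊ : ℝ≥0∞)
                  = ENNReal.ofReal (∑' X : {X : Finset (Fin d → ℤ) // x ∈ X ∧ X.card = m + 1},
                      ‖φ X.1‖) := by
                rw [ENNReal.ofReal_tsum_of_nonneg (fun _ => norm_nonneg _) (hsum x m)]
                exact tsum_congr fun X => (ofReal_norm _).symm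
              rw [heq]
              exact ENNReal.ofReal_le_ofReal (tsum_le_bnd φ hbdd x m)
          _ = ENNReal.ofReal (Real.exp (lam * m) * bnd φ m) := by
              rw [ENNReal.ofReal_mul (Real.exp_pos _).le]
    _ = ENNReal.ofReal (normL lam φ) := by
        rw [← ENNReal.ofReal_tsum_of_nonneg
          (fun m => mul_nonneg (Real.exp_pos _).le (bnd_nonneg φ hbdd m)) hnorm]
        rfl

/-- Sum over all X meeting S, weighted by e^{λ(|X|-1)}, is at most |S| ‖φ‖_λ. -/
lemma tsum_meet_le (φ : Finset (Fin d → ℤ) → A) (lam : ℝ)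
    (hsum : ∀ (x : Fin d → ℤ) (n : ℕ),
      Summable fun X : {X : Finset (Fin d → ℤ) // x ∈ X ∧ X.card = n + 1} => ‖φ X.1‖)
    (hbdd : ∀ n : ℕ, BddAbove (Set.range fun x : Fin d → ℤ =>
      ∑' X : {X : Finset (Fin d → ℤ) // x ∈ X ∧ X.card = n + 1}, ‖φ X.1‖))
    (hnorm : Summable fun n : ℕ => Real.exp (lam * n) * bnd φ n)
    (S : Finset (Fin d → ℤ)) :
    ∑' X : Finset (Fin d → ℤ),
      (if (X ∩ S).Nonempty then (‖φ X‖₊ : ℝ≥0∞) *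
        ENNReal.ofReal (Real.exp (lam * (X.card - 1 : ℕ))) else 0)
      ≤ (S.card : ℝ≥0∞) * ENNReal.ofReal (normL lam φ) := by
  classical
  have hpt : ∀ X : Finset (Fin d → ℤ),
      (if (X ∩ S).Nonempty then (‖φ X‖₊ : ℝ≥0∞) *
        ENNReal.ofReal (Real.exp (lam * (X.card - 1 : ℕ))) else 0)
      ≤ ∑ x ∈ S, (if x ∈ X then (‖φ X‖₊ : ℝ≥0∞) *
          ENNReal.ofReal (Real.exp (lam * (X.card - 1 : ℕ))) else 0) := by
    intro X
    by_cases h : (X ∩ S).Nonempty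
    · obtain ⟨x, hx⟩ := h
      rw [Finset.mem_inter] at hx
      rw [if_pos ⟨x, Finset.mem_inter.mpr hx⟩]
      calc (‖φ X‖₊ : ℝ≥0∞) * ENNReal.ofReal (Real.exp (lam * (X.card - 1 : ℕ)))
          = (if x ∈ X then (‖φ X‖₊ : ℝ≥0∞) *
              ENNReal.ofReal (Real.exp (lam * (X.card - 1 : ℕ))) else 0) := by rw [if_pos hx.1]
        _ ≤ _ := Finset.single_le_sum (f := fun y => (if y ∈ X then (‖φ X‖₊ : ℝ≥0∞) *
              ENNReal.ofReal (Real.exp (lam * (X.card - 1 : ℕ))) else 0))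
              (fun _ _ => zero_le) hx.2
    · rw [if_neg h]; exact zero_le
  calc ∑' X : Finset (Fin d → ℤ), (if (X ∩ S).Nonempty then (‖φ X‖₊ : ℝ≥0∞) *
        ENNReal.ofReal (Real.exp (lam * (X.card - 1 : ℕ))) else 0)
      ≤ ∑' X : Finset (Fin d → ℤ), ∑ x ∈ S, (if x ∈ X then (‖φ X‖₊ : ℝ≥0∞) *
          ENNReal.ofReal (Real.exp (lam * (X.card - 1 : ℕ))) else 0) :=
        ENNReal.tsum_le_tsum hpt
    _ = ∑ x ∈ S, ∑' X : Finset (Fin d → ℤ), (if x ∈ X then (‖φ X‖₊ : ℝ≥0∞) *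
          ENNReal.ofReal (Real.exp (lam * (X.card - 1 : ℕ))) else 0) :=
        Summable.tsum_finsetSum fun _ _ => ENNReal.summable
    _ ≤ ∑ _x ∈ S, ENNReal.ofReal (normL lam φ) :=
        Finset.sum_le_sum fun x _ => tsum_site_le φ lam hsum hbdd hnorm x
    _ = (S.card : ℝ≥0∞) * ENNReal.ofReal (normL lam φ) := by
        rw [Finset.sum_const, nsmul_eq_mul]

lemma card_union_meet (S X : Finset (Fin d → ℤ)) (h : (X ∩ S).Nonempty) :
    (S ∪ X).card ≤ S.card + (X.card - 1) := by
  obtain ⟨x, hx⟩ := h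
  rw [Finset.mem_inter] at hx
  have h1 : S ∪ X = S ∪ (X \ S) := (Finset.union_sdiff_self_eq_union).symm
  rw [h1, Finset.card_union_of_disjoint Finset.disjoint_sdiff]
  have h2 : X \ S ⊆ X.erase x := by
    intro y hy
    rw [Finset.mem_sdiff] at hy
    rw [Finset.mem_erase]
    exact ⟨fun hyx => hy.2 (hyx ▸ hx.2), hy.1⟩
  have h3 := Finset.card_le_card h2
  rw [Finset.card_erase_of_mem hx.1] at h3
  omega

/-- The key combinatorial estimate. -/
lemma comb (φ : Finset (Fin d → ℤ) → A) (lam : ℝ) (hlam : 0 < lam)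
    (hsum : ∀ (x : Fin d → ℤ) (n : ℕ),
      Summable fun X : {X : Finset (Fin d → ℤ) // x ∈ X ∧ X.card = n + 1} => ‖φ X.1‖)
    (hbdd : ∀ n : ℕ, BddAbove (Set.range fun x : Fin d → ℤ =>
      ∑' X : {X : Finset (Fin d → ℤ) // x ∈ X ∧ X.card = n + 1}, ‖φ X.1‖))
    (hnorm : Summable fun n : ℕ => Real.exp (lam * n) * bnd φ n) :
    ∀ (n k : ℕ) (S : Finset (Fin d → ℤ)),
    ∑' Xs : Fin n → Finset (Fin d → ℤ),
        chainW φ n S Xs * (ENNReal.ofReal lam * (Uset n S Xs).card) ^ k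
      ≤ (Nat.factorial (n + k) : ℝ≥0∞) * (ENNReal.ofReal (normL lam φ / lam)) ^ n
          * ENNReal.ofReal (Real.exp (lam * S.card)) := by
  intro n
  induction n with
  | zero =>
    intro k S
    have huniq : ∀ Xs : Fin 0 → Finset (Fin d → ℤ), Xs = (fun i => i.elim0) :=
      fun Xs => funext fun i => i.elim0
    rw [tsum_eq_single (fun i : Fin 0 => i.elim0) (fun Xs h => absurd (huniq Xs) h)]
    rw [show chainW φ 0 S (fun i => i.elim0) = 1 from rfl,
      show Uset 0 S (fun i => i.elim0) = S from rfl, one_mul, Nat.zero_add, pow_zero, mul_one]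
    have h1 : (ENNReal.ofReal lam * (S.card : ℝ≥0∞)) ^ k
        = ENNReal.ofReal ((lam * S.card) ^ k) := by
      rw [← ENNReal.ofReal_natCast S.card, ← ENNReal.ofReal_mul hlam.le,
        ← ENNReal.ofReal_pow (by positivity)]
    rw [h1, ← ENNReal.ofReal_natCast (Nat.factorial k), ← ENNReal.ofReal_mul (by positivity)]
    refine ENNReal.ofReal_le_ofReal ?_
    have h2 := Real.pow_div_factorial_le_exp (x := lam * S.card) (by positivity) k
    rw [div_le_iff₀ (by positivity)] at h2
    nlinarith [h2]
  | succ n ih =>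
    intro k S
    by_cases hS : S.Nonempty
    · -- main case
      set L := ENNReal.ofReal lam with hLdef
      set K' := ENNReal.ofReal (normL lam φ) with hK'def
      set Kl := ENNReal.ofReal (normL lam φ / lam) with hKldef
      have hL0 : L ≠ 0 := (ENNReal.ofReal_pos.mpr hlam).ne'
      have hLtop : L ≠ ⊤ := ENNReal.ofReal_ne_top
      have hs0 : ((S.card : ℝ≥0∞)) ≠ 0 := by
        simpa using Finset.card_ne_zero.mpr hS
      have hstop : ((S.card : ℝ≥0∞)) ≠ ⊤ := ENNReal.natCast_ne_top _
      have hLs0 : L * (S.card : ℝ≥0∞) ≠ 0 := mul_ne_zero hL0 hs0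
      have hLstop : L * (S.card : ℝ≥0∞) ≠ ⊤ := ENNReal.mul_ne_top hLtop hstop
      set e := Fin.consEquiv (fun _ : Fin (n+1) => Finset (Fin d → ℤ)) with hedef
      rw [← Equiv.tsum_eq e]
      have hterm : ∀ q : Finset (Fin d → ℤ) × (Fin n → Finset (Fin d → ℤ)),
          chainW φ (n+1) S (e q) * (L * ((Uset (n+1) S (e q)).card : ℝ≥0∞)) ^ k
          = (if (q.1 ∩ S).Nonempty then (‖φ q.1‖₊ : ℝ≥0∞) else 0) *
            (chainW φ n (S ∪ q.1) q.2 * (L * ((Uset n (S ∪ q.1) q.2).card : ℝ≥0∞)) ^ k) := by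
        intro q
        have he : e q = Fin.cons q.1 q.2 := rfl
        rw [he, chainW_succ, Uset_succ, Fin.cons_zero, Fin.tail_cons, mul_assoc]
      have hinner : ∀ X : Finset (Fin d → ℤ),
          (∑' Xs : Fin n → Finset (Fin d → ℤ),
            chainW φ n (S ∪ X) Xs * (L * ((Uset n (S ∪ X) Xs).card : ℝ≥0∞)) ^ k)
          ≤ (L * (S.card : ℝ≥0∞))⁻¹ * ((Nat.factorial (n + (k+1)) : ℝ≥0∞) * Kl ^ n
              * ENNReal.ofReal (Real.exp (lam * ((S ∪ X).card)))) := by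
        intro X
        have hstep : ∀ Xs : Fin n → Finset (Fin d → ℤ),
            chainW φ n (S ∪ X) Xs * (L * ((Uset n (S ∪ X) Xs).card : ℝ≥0∞)) ^ k
            ≤ (L * (S.card : ℝ≥0∞))⁻¹ *
              (chainW φ n (S ∪ X) Xs * (L * ((Uset n (S ∪ X) Xs).card : ℝ≥0∞)) ^ (k+1)) := by
          intro Xs
          set a := L * ((Uset n (S ∪ X) Xs).card : ℝ≥0∞) with hadef
          have hge : L * (S.card : ℝ≥0∞) ≤ a := by
            refine mul_le_mul_right ?_ L
            have hsub : S ⊆ Uset n (S ∪ X) Xs :=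
              Finset.Subset.trans Finset.subset_union_left (subset_Uset n _ _)
            exact_mod_cast Nat.cast_le.mpr (Finset.card_le_card hsub)
          calc chainW φ n (S ∪ X) Xs * a ^ k
              = (L * (S.card : ℝ≥0∞))⁻¹ *
                ((L * (S.card : ℝ≥0∞)) * (chainW φ n (S ∪ X) Xs * a ^ k)) := by
                rw [← mul_assoc, ENNReal.inv_mul_cancel hLs0 hLstop, one_mul]
            _ ≤ (L * (S.card : ℝ≥0∞))⁻¹ * (a * (chainW φ n (S ∪ X) Xs * a ^ k)) := by
                gcongr
            _ = (L * (S.card : ℝ≥0∞))⁻¹ *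
                (chainW φ n (S ∪ X) Xs * a ^ (k+1)) := by ring
        calc (∑' Xs : Fin n → Finset (Fin d → ℤ),
              chainW φ n (S ∪ X) Xs * (L * ((Uset n (S ∪ X) Xs).card : ℝ≥0∞)) ^ k)
            ≤ ∑' Xs : Fin n → Finset (Fin d → ℤ), (L * (S.card : ℝ≥0∞))⁻¹ *
              (chainW φ n (S ∪ X) Xs * (L * ((Uset n (S ∪ X) Xs).card : ℝ≥0∞)) ^ (k+1)) :=
              ENNReal.tsum_le_tsum hstep
          _ = (L * (S.card : ℝ≥0∞))⁻¹ * ∑' Xs : Fin n → Finset (Fin d → ℤ),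
              chainW φ n (S ∪ X) Xs * (L * ((Uset n (S ∪ X) Xs).card : ℝ≥0∞)) ^ (k+1) :=
              ENNReal.tsum_mul_left
          _ ≤ _ := by gcongr; exact ih (k+1) (S ∪ X)
      calc ∑' q : Finset (Fin d → ℤ) × (Fin n → Finset (Fin d → ℤ)),
            chainW φ (n+1) S (e q) * (L * ((Uset (n+1) S (e q)).card : ℝ≥0∞)) ^ k
          = ∑' (X : Finset (Fin d → ℤ)) (Xs : Fin n → Finset (Fin d → ℤ)),
            (if (X ∩ S).Nonempty then (‖φ X‖₊ : ℝ≥0∞) else 0) *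
            (chainW φ n (S ∪ X) Xs * (L * ((Uset n (S ∪ X) Xs).card : ℝ≥0∞)) ^ k) := by
            rw [tsum_congr hterm]
            exact ENNReal.tsum_prod' 
        _ = ∑' (X : Finset (Fin d → ℤ)),
            (if (X ∩ S).Nonempty then (‖φ X‖₊ : ℝ≥0∞) else 0) *
            ∑' (Xs : Fin n → Finset (Fin d → ℤ)),
            (chainW φ n (S ∪ X) Xs * (L * ((Uset n (S ∪ X) Xs).card : ℝ≥0∞)) ^ k) := by
            exact tsum_congr fun X => ENNReal.tsum_mul_left
        _ ≤ ∑' (X : Finset (Fin d → ℤ)),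
            (if (X ∩ S).Nonempty then (‖φ X‖₊ : ℝ≥0∞) *
              ENNReal.ofReal (Real.exp (lam * (X.card - 1 : ℕ))) else 0) *
            ((L * (S.card : ℝ≥0∞))⁻¹ * ((Nat.factorial (n + (k+1)) : ℝ≥0∞) * Kl ^ n
              * ENNReal.ofReal (Real.exp (lam * S.card)))) := by
            refine ENNReal.tsum_le_tsum fun X => ?_
            by_cases hX : (X ∩ S).Nonempty
            · rw [if_pos hX, if_pos hX]
              have hcard : ((S ∪ X).card : ℝ) ≤ (S.card : ℝ) + ((X.card - 1 : ℕ) : ℝ) := by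
                exact_mod_cast card_union_meet S X hX
              have hexp : ENNReal.ofReal (Real.exp (lam * ((S ∪ X).card)))
                  ≤ ENNReal.ofReal (Real.exp (lam * S.card) *
                    Real.exp (lam * (X.card - 1 : ℕ))) := by
                rw [← Real.exp_add, ← mul_add]
                exact ENNReal.ofReal_le_ofReal (Real.exp_le_exp.mpr
                  (mul_le_mul_of_nonneg_left hcard hlam.le))
              calc (‖φ X‖₊ : ℝ≥0∞) * (∑' Xs : Fin n → Finset (Fin d → ℤ),
                    chainW φ n (S ∪ X) Xs * (L * ((Uset n (S ∪ X) Xs).card : ℝ≥0∞)) ^ k)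
                  ≤ (‖φ X‖₊ : ℝ≥0∞) * ((L * (S.card : ℝ≥0∞))⁻¹ *
                    ((Nat.factorial (n + (k+1)) : ℝ≥0∞) * Kl ^ n
                      * ENNReal.ofReal (Real.exp (lam * ((S ∪ X).card))))) := by
                    gcongr
                    exact hinner X
                _ ≤ (‖φ X‖₊ : ℝ≥0∞) * ((L * (S.card : ℝ≥0∞))⁻¹ *
                    ((Nat.factorial (n + (k+1)) : ℝ≥0∞) * Kl ^ n
                      * (ENNReal.ofReal (Real.exp (lam * S.card)) *
                        ENNReal.ofReal (Real.exp (lam * (X.card - 1 : ℕ)))))) := by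
                    gcongr
                    rw [← ENNReal.ofReal_mul (Real.exp_pos _).le]
                    exact hexp
                _ = (‖φ X‖₊ : ℝ≥0∞) * ENNReal.ofReal (Real.exp (lam * (X.card - 1 : ℕ))) *
                    ((L * (S.card : ℝ≥0∞))⁻¹ * ((Nat.factorial (n + (k+1)) : ℝ≥0∞) * Kl ^ n
                      * ENNReal.ofReal (Real.exp (lam * S.card)))) := by ring
            · rw [if_neg hX, if_neg hX, zero_mul, zero_mul]
        _ = (∑' (X : Finset (Fin d → ℤ)),
            (if (X ∩ S).Nonempty then (‖φ X‖₊ : ℝ≥0∞) *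
              ENNReal.ofReal (Real.exp (lam * (X.card - 1 : ℕ))) else 0)) *
            ((L * (S.card : ℝ≥0∞))⁻¹ * ((Nat.factorial (n + (k+1)) : ℝ≥0∞) * Kl ^ n
              * ENNReal.ofReal (Real.exp (lam * S.card)))) := ENNReal.tsum_mul_right
        _ ≤ ((S.card : ℝ≥0∞) * K') *
            ((L * (S.card : ℝ≥0∞))⁻¹ * ((Nat.factorial (n + (k+1)) : ℝ≥0∞) * Kl ^ n
              * ENNReal.ofReal (Real.exp (lam * S.card)))) := by
            gcongr
            exact tsum_meet_le φ lam hsum hbdd hnorm S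
        _ = (Nat.factorial (n + 1 + k) : ℝ≥0∞) * Kl ^ (n+1)
              * ENNReal.ofReal (Real.exp (lam * S.card)) := by
            have hinv : ((S.card : ℝ≥0∞)) * (L * (S.card : ℝ≥0∞))⁻¹ = L⁻¹ := by
              rw [ENNReal.mul_inv (Or.inl hL0) (Or.inl hLtop)]
              rw [mul_comm L⁻¹ _, ← mul_assoc, ENNReal.mul_inv_cancel hs0 hstop, one_mul]
            have hKL : K' * L⁻¹ = Kl := by
              rw [hKldef, ENNReal.ofReal_div_of_pos hlam, div_eq_mul_inv]
            have hfac : n + (k + 1) = n + 1 + k := by omega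
            calc ((S.card : ℝ≥0∞) * K') *
                ((L * (S.card : ℝ≥0∞))⁻¹ * ((Nat.factorial (n + (k+1)) : ℝ≥0∞) * Kl ^ n
                  * ENNReal.ofReal (Real.exp (lam * S.card))))
                = (((S.card : ℝ≥0∞)) * (L * (S.card : ℝ≥0∞))⁻¹) * K' *
                  ((Nat.factorial (n + (k+1)) : ℝ≥0∞) * Kl ^ n
                    * ENNReal.ofReal (Real.exp (lam * S.card))) := by ring
              _ = (Nat.factorial (n + (k+1)) : ℝ≥0∞) * (Kl ^ n * (K' * L⁻¹))
                    * ENNReal.ofReal (Real.exp (lam * S.card)) := by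
                  rw [hinv]; ring
              _ = (Nat.factorial (n + 1 + k) : ℝ≥0∞) * Kl ^ (n+1)
                    * ENNReal.ofReal (Real.exp (lam * S.card)) := by
                  rw [hKL, ← pow_succ, hfac]
    · -- S empty
      have hS' : S = ∅ := Finset.not_nonempty_iff_eq_empty.mp hS
      have hz : ∀ Xs : Fin (n+1) → Finset (Fin d → ℤ),
          chainW φ (n+1) S Xs *
            (ENNReal.ofReal lam * ((Uset (n+1) S Xs).card : ℝ≥0∞)) ^ k = 0 := by
        intro Xs
        rw [chainW_succ, hS']
        rw [if_neg (by simp)]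
        rw [zero_mul, zero_mul]
      rw [(ENNReal.tsum_eq_zero).mpr hz]
      exact zero_le

lemma chainW_tsum_ne_top (φ : Finset (Fin d → ℤ) → A) (lam : ℝ) (hlam : 0 < lam)
    (hsum : ∀ (x : Fin d → ℤ) (n : ℕ),
      Summable fun X : {X : Finset (Fin d → ℤ) // x ∈ X ∧ X.card = n + 1} => ‖φ X.1‖)
    (hbdd : ∀ n : ℕ, BddAbove (Set.range fun x : Fin d → ℤ =>
      ∑' X : {X : Finset (Fin d → ℤ) // x ∈ X ∧ X.card = n + 1}, ‖φ X.1‖))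
    (hnorm : Summable fun n : ℕ => Real.exp (lam * n) * bnd φ n)
    (n : ℕ) (S : Finset (Fin d → ℤ)) :
    ∑' Xs : Fin n → Finset (Fin d → ℤ), chainW φ n S Xs ≠ ⊤ := by
  have h := comb φ lam hlam hsum hbdd hnorm n 0 S
  simp only [pow_zero, mul_one, Nat.add_zero] at h
  exact ne_top_of_le_ne_top (by
    exact ENNReal.mul_ne_top (ENNReal.mul_ne_top (ENNReal.natCast_ne_top _)
      (ENNReal.pow_ne_top ENNReal.ofReal_ne_top)) ENNReal.ofReal_ne_top) h

lemma chainW_comb_bound (φ : Finset (Fin d → ℤ) → A) (lam : ℝ) (hlam : 0 < lam)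
    (hsum : ∀ (x : Fin d → ℤ) (n : ℕ),
      Summable fun X : {X : Finset (Fin d → ℤ) // x ∈ X ∧ X.card = n + 1} => ‖φ X.1‖)
    (hbdd : ∀ n : ℕ, BddAbove (Set.range fun x : Fin d → ℤ =>
      ∑' X : {X : Finset (Fin d → ℤ) // x ∈ X ∧ X.card = n + 1}, ‖φ X.1‖))
    (hnorm : Summable fun n : ℕ => Real.exp (lam * n) * bnd φ n)
    (n : ℕ) (S : Finset (Fin d → ℤ)) :
    ∑' Xs : Fin n → Finset (Fin d → ℤ), chainW φ n S Xs
      ≤ (Nat.factorial n : ℝ≥0∞) * (ENNReal.ofReal (normL lam φ / lam)) ^ n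
          * ENNReal.ofReal (Real.exp (lam * S.card)) := by
  have h := comb φ lam hlam hsum hbdd hnorm n 0 S
  simpa only [pow_zero, mul_one, Nat.add_zero] using h

lemma summable_of_chainW_bound [CompleteSpace A]
    (φ : Finset (Fin d → ℤ) → A) (lam : ℝ) (hlam : 0 < lam)
    (hsum : ∀ (x : Fin d → ℤ) (n : ℕ),
      Summable fun X : {X : Finset (Fin d → ℤ) // x ∈ X ∧ X.card = n + 1} => ‖φ X.1‖)
    (hbdd : ∀ n : ℕ, BddAbove (Set.range fun x : Fin d → ℤ =>
      ∑' X : {X : Finset (Fin d → ℤ) // x ∈ X ∧ X.card = n + 1}, ‖φ X.1‖))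
    (hnorm : Summable fun n : ℕ => Real.exp (lam * n) * bnd φ n)
    (n : ℕ) (S : Finset (Fin d → ℤ)) (c : ℝ≥0∞) (hc : c ≠ ⊤)
    (g : (Fin n → Finset (Fin d → ℤ)) → A)
    (hg : ∀ Xs, (‖g Xs‖₊ : ℝ≥0∞) ≤ c * chainW φ n S Xs) :
    Summable g := by
  have h1 : ∑' Xs : Fin n → Finset (Fin d → ℤ), (‖g Xs‖₊ : ℝ≥0∞)
      ≤ c * ∑' Xs : Fin n → Finset (Fin d → ℤ), chainW φ n S Xs := by
    rw [← ENNReal.tsum_mul_left]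
    exact ENNReal.tsum_le_tsum hg
  have h2 : ∑' Xs : Fin n → Finset (Fin d → ℤ), (‖g Xs‖₊ : ℝ≥0∞) ≠ ⊤ :=
    ne_top_of_le_ne_top (ENNReal.mul_ne_top hc
      (chainW_tsum_ne_top φ lam hlam hsum hbdd hnorm n S)) h1
  exact Summable.of_nnnorm (ENNReal.tsum_coe_ne_top_iff_summable.mp h2)

/-- The main representation of the iterated derivation as a sum over chains. -/
lemma diter_rep [CompleteSpace A]
    (φ : Finset (Fin d → ℤ) → A) (lam : ℝ) (hlam : 0 < lam)
    (hsum : ∀ (x : Fin d → ℤ) (n : ℕ),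
      Summable fun X : {X : Finset (Fin d → ℤ) // x ∈ X ∧ X.card = n + 1} => ‖φ X.1‖)
    (hbdd : ∀ n : ℕ, BddAbove (Set.range fun x : Fin d → ℤ =>
      ∑' X : {X : Finset (Fin d → ℤ) // x ∈ X ∧ X.card = n + 1}, ‖φ X.1‖))
    (hnorm : Summable fun n : ℕ => Real.exp (lam * n) * bnd φ n)
    (Alg : Finset (Fin d → ℤ) → Subalgebra ℂ A)
    (hmono : ∀ X Y, X ⊆ Y → Alg X ≤ Alg Y)
    (hloc : ∀ X, φ X ∈ Alg X)
    (hcomm : ∀ X Y : Finset (Fin d → ℤ), Disjoint X Y →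
      ∀ a ∈ Alg X, ∀ b ∈ Alg Y, a * b = b * a)
    (Λ : Finset (Fin d → ℤ)) (f : A) (hf : f ∈ Alg Λ) :
    ∀ n : ℕ, ∃ g : (Fin n → Finset (Fin d → ℤ)) → A,
      (Diter φ n f = ∑' Xs, g Xs) ∧
      (∀ Xs, g Xs ∈ Alg (Uset n Λ Xs)) ∧
      (∀ Xs, (‖g Xs‖₊ : ℝ≥0∞) ≤ 2 ^ n * (‖f‖₊ : ℝ≥0∞) * chainW φ n Λ Xs) := by
  intro n
  induction n with
  | zero =>
    refine ⟨fun _ => f, ?_, fun Xs => hf, fun Xs => ?_⟩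
    · show f = ∑' _ : Fin 0 → Finset (Fin d → ℤ), f
      exact (tsum_eq_single (f := fun _ : Fin 0 → Finset (Fin d → ℤ) => f)
        (fun i : Fin 0 => i.elim0) (fun Xs h => absurd (funext fun i => i.elim0) h)).symm
    · rw [show chainW φ 0 Λ Xs = 1 from rfl]
      simp
  | succ n ih =>
    obtain ⟨g, hrep, hmem, hbound⟩ := ih
    -- Summability of g
    have hgsum : Summable g :=
      summable_of_chainW_bound φ lam hlam hsum hbdd hnorm n Λ
        (2 ^ n * (‖f‖₊ : ℝ≥0∞))
        (ENNReal.mul_ne_top (by simp) ENNReal.coe_ne_top) g hbound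
    -- the new function
    set g' : (Fin (n+1) → Finset (Fin d → ℤ)) → A := fun Ys =>
      Complex.I • (φ (Ys (Fin.last n)) * g (Fin.init Ys) -
        g (Fin.init Ys) * φ (Ys (Fin.last n))) with hg'def
    have hg'snoc : ∀ (Xs : Fin n → Finset (Fin d → ℤ)) (X : Finset (Fin d → ℤ)),
        g' (Fin.snoc Xs X) = Complex.I • (φ X * g Xs - g Xs * φ X) := by
      intro Xs X
      simp only [hg'def, Fin.snoc_last, Fin.init_snoc]
    -- vanishing + norm bound
    have hg'bound : ∀ Ys, (‖g' Ys‖₊ : ℝ≥0∞)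
        ≤ 2 ^ (n+1) * (‖f‖₊ : ℝ≥0∞) * chainW φ (n+1) Λ Ys := by
      intro Ys
      induction Ys using Fin.snocCases with
      | snoc Xs X =>
        rw [hg'snoc, chainW_snoc]
        by_cases hX : (X ∩ Uset n Λ Xs).Nonempty
        · rw [if_pos hX]
          have h1 : (‖Complex.I • (φ X * g Xs - g Xs * φ X)‖₊ : ℝ≥0∞)
              = (‖(φ X * g Xs - g Xs * φ X)‖₊ : ℝ≥0∞) := by
            rw [nnnorm_smul, Complex.nnnorm_I, one_mul]
          rw [h1]
          have h2 : (‖(φ X * g Xs - g Xs * φ X)‖₊ : ℝ≥0∞)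
              ≤ (‖φ X‖₊ : ℝ≥0∞) * ‖g Xs‖₊ + (‖g Xs‖₊ : ℝ≥0∞) * ‖φ X‖₊ := by
            calc (‖(φ X * g Xs - g Xs * φ X)‖₊ : ℝ≥0∞)
                ≤ (‖φ X * g Xs‖₊ : ℝ≥0∞) + ‖g Xs * φ X‖₊ := by
                  exact_mod_cast nnnorm_sub_le _ _
              _ ≤ (‖φ X‖₊ : ℝ≥0∞) * ‖g Xs‖₊ + (‖g Xs‖₊ : ℝ≥0∞) * ‖φ X‖₊ := by
                  gcongr <;> exact_mod_cast nnnorm_mul_le _ _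
          refine h2.trans ?_
          have h3 : (‖φ X‖₊ : ℝ≥0∞) * ‖g Xs‖₊ + (‖g Xs‖₊ : ℝ≥0∞) * ‖φ X‖₊
              = 2 * (‖g Xs‖₊ : ℝ≥0∞) * ‖φ X‖₊ := by ring
          rw [h3]
          calc 2 * (‖g Xs‖₊ : ℝ≥0∞) * ‖φ X‖₊
              ≤ 2 * (2 ^ n * (‖f‖₊ : ℝ≥0∞) * chainW φ n Λ Xs) * ‖φ X‖₊ := by
                gcongr
                exact hbound Xs
            _ = 2 ^ (n+1) * (‖f‖₊ : ℝ≥0∞) * (chainW φ n Λ Xs * ‖φ X‖₊) := by ring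
        · rw [if_neg hX]
          have hdisj : Disjoint X (Uset n Λ Xs) := by
            rw [Finset.disjoint_iff_inter_eq_empty]
            exact Finset.not_nonempty_iff_eq_empty.mp hX
          have hc : φ X * g Xs = g Xs * φ X :=
            hcomm X (Uset n Λ Xs) hdisj (φ X) (hloc X) (g Xs) (hmem Xs)
          rw [hc, sub_self, smul_zero]
          simp
    -- membership
    have hg'mem : ∀ Ys, g' Ys ∈ Alg (Uset (n+1) Λ Ys) := by
      intro Ys
      induction Ys using Fin.snocCases with
      | snoc Xs X =>
        rw [hg'snoc, Uset_snoc]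
        have h1 : φ X ∈ Alg (Uset n Λ Xs ∪ X) :=
          hmono X _ Finset.subset_union_right (hloc X)
        have h2 : g Xs ∈ Alg (Uset n Λ Xs ∪ X) :=
          hmono _ _ Finset.subset_union_left (hmem Xs)
        exact Subalgebra.smul_mem _ (sub_mem (mul_mem h1 h2) (mul_mem h2 h1)) _
    -- H' without the I factor
    set H' : (Fin (n+1) → Finset (Fin d → ℤ)) → A := fun Ys =>
      φ (Ys (Fin.last n)) * g (Fin.init Ys) - g (Fin.init Ys) * φ (Ys (Fin.last n)) with hH'def
    have hH'norm : ∀ Ys, (‖H' Ys‖₊ : ℝ≥0∞) = (‖g' Ys‖₊ : ℝ≥0∞) := by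
      intro Ys
      rw [hg'def]
      beta_reduce
      rw [nnnorm_smul, Complex.nnnorm_I, one_mul]
    have hH'sum : Summable H' :=
      summable_of_chainW_bound φ lam hlam hsum hbdd hnorm (n+1) Λ
        (2 ^ (n+1) * (‖f‖₊ : ℝ≥0∞))
        (ENNReal.mul_ne_top (by simp) ENNReal.coe_ne_top) H'
        (fun Ys => (hH'norm Ys).le.trans (hg'bound Ys))
    have hg'sum : Summable g' :=
      summable_of_chainW_bound φ lam hlam hsum hbdd hnorm (n+1) Λ
        (2 ^ (n+1) * (‖f‖₊ : ℝ≥0∞))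
        (ENNReal.mul_ne_top (by simp) ENNReal.coe_ne_top) g' hg'bound
    -- the snoc equivalence
    set esn := Fin.snocEquiv (fun _ : Fin (n+1) => Finset (Fin d → ℤ)) with hesndef
    have hesn : ∀ (p : Finset (Fin d → ℤ) × (Fin n → Finset (Fin d → ℤ))),
        esn p = Fin.snoc p.2 p.1 := fun p => rfl
    set H : Finset (Fin d → ℤ) × (Fin n → Finset (Fin d → ℤ)) → A := fun p =>
      φ p.1 * g p.2 - g p.2 * φ p.1 with hHdef
    have hHesn : H' ∘ esn = H := by
      funext p
      simp only [Function.comp_apply, hesn, hH'def, hHdef, Fin.snoc_last, Fin.init_snoc]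
    have hHsum : Summable H := by
      rw [← hHesn]
      exact (esn.summable_iff (f := H')).mpr hH'sum
    refine ⟨g', ?_, hg'mem, hg'bound⟩
    -- the representation
    have hstep1 : ∀ X : Finset (Fin d → ℤ),
        φ X * Diter φ n f - Diter φ n f * φ X = ∑' Xs, H (X, Xs) := by
      intro X
      rw [hrep]
      rw [← hgsum.tsum_mul_left (φ X), ← hgsum.tsum_mul_right (φ X)]
      exact (Summable.tsum_sub (hgsum.mul_left (φ X)) (hgsum.mul_right (φ X))).symm
    show Complex.I • ∑' X : Finset (Fin d → ℤ),
        (φ X * Diter φ n f - Diter φ n f * φ X) = ∑' Ys, g' Ys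
    calc Complex.I • ∑' X : Finset (Fin d → ℤ), (φ X * Diter φ n f - Diter φ n f * φ X)
        = Complex.I • ∑' (X : Finset (Fin d → ℤ)) (Xs : Fin n → Finset (Fin d → ℤ)),
            H (X, Xs) := by rw [tsum_congr hstep1]
      _ = Complex.I • ∑' p : Finset (Fin d → ℤ) × (Fin n → Finset (Fin d → ℤ)), H p := by
          rw [Summable.tsum_prod' hHsum hHsum.prod_factor]
      _ = Complex.I • ∑' Ys : Fin (n+1) → Finset (Fin d → ℤ), H' Ys := by
          rw [← esn.tsum_eq H']
          congr 1
          exact (tsum_congr fun p => by rw [← hHesn]; rfl)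
      _ = ∑' Ys : Fin (n+1) → Finset (Fin d → ℤ), g' Ys := by
          rw [← tsum_const_smul'' Complex.I]

lemma key_bound [CompleteSpace A]
    (φ : Finset (Fin d → ℤ) → A) (lam : ℝ) (hlam : 0 < lam)
    (hsum : ∀ (x : Fin d → ℤ) (n : ℕ),
      Summable fun X : {X : Finset (Fin d → ℤ) // x ∈ X ∧ X.card = n + 1} => ‖φ X.1‖)
    (hbdd : ∀ n : ℕ, BddAbove (Set.range fun x : Fin d → ℤ =>
      ∑' X : {X : Finset (Fin d → ℤ) // x ∈ X ∧ X.card = n + 1}, ‖φ X.1‖))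
    (hnorm : Summable fun n : ℕ => Real.exp (lam * n) * bnd φ n)
    (Alg : Finset (Fin d → ℤ) → Subalgebra ℂ A)
    (hmono : ∀ X Y, X ⊆ Y → Alg X ≤ Alg Y)
    (hloc : ∀ X, φ X ∈ Alg X)
    (hcomm : ∀ X Y : Finset (Fin d → ℤ), Disjoint X Y →
      ∀ a ∈ Alg X, ∀ b ∈ Alg Y, a * b = b * a)
    (Λ : Finset (Fin d → ℤ)) (f : A) (hf : f ∈ Alg Λ) (n : ℕ) :
    ‖Diter φ n f‖ ≤
      (2 * normL lam φ / lam) ^ n * n.factorial * Real.exp (lam * Λ.card) * ‖f‖ := by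
  obtain ⟨g, hrep, hmem, hbound⟩ :=
    diter_rep φ lam hlam hsum hbdd hnorm Alg hmono hloc hcomm Λ f hf n
  have hfin : ∑' Xs : Fin n → Finset (Fin d → ℤ), (‖g Xs‖₊ : ℝ≥0∞) ≠ ⊤ := by
    refine ne_top_of_le_ne_top ?_ ((ENNReal.tsum_le_tsum hbound).trans
      (le_of_eq ENNReal.tsum_mul_left))
    exact ENNReal.mul_ne_top (ENNReal.mul_ne_top (by simp) ENNReal.coe_ne_top)
      (chainW_tsum_ne_top φ lam hlam hsum hbdd hnorm n Λ)
  have hnnsum : Summable fun Xs => (‖g Xs‖₊ : ℝ≥0) :=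
    ENNReal.tsum_coe_ne_top_iff_summable.mp hfin
  have hnormsum : Summable fun Xs => ‖g Xs‖ := by
    have := NNReal.summable_coe.mpr hnnsum
    simpa [coe_nnnorm] using this
  have h1 : ‖Diter φ n f‖ ≤ ∑' Xs, ‖g Xs‖ := by
    rw [hrep]; exact norm_tsum_le_tsum_norm hnormsum
  have hRnn : 0 ≤ (2 * normL lam φ / lam) ^ n * n.factorial * Real.exp (lam * Λ.card) * ‖f‖ := by
    have hK := normL_nonneg φ lam hbdd
    positivity
  refine h1.trans ?_
  rw [← ENNReal.ofReal_le_ofReal_iff hRnn]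
  have h2 : ENNReal.ofReal (∑' Xs, ‖g Xs‖)
      = ∑' Xs : Fin n → Finset (Fin d → ℤ), (‖g Xs‖₊ : ℝ≥0∞) := by
    rw [ENNReal.ofReal_tsum_of_nonneg (fun _ => norm_nonneg _) hnormsum]
    exact tsum_congr fun Xs => ofReal_norm _
  rw [h2]
  have hK := normL_nonneg φ lam hbdd
  have h3 : ENNReal.ofReal ((2 * normL lam φ / lam) ^ n * n.factorial *
        Real.exp (lam * Λ.card) * ‖f‖)
      = 2 ^ n * (‖f‖₊ : ℝ≥0∞) * ((Nat.factorial n : ℝ≥0∞) *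
          (ENNReal.ofReal (normL lam φ / lam)) ^ n *
          ENNReal.ofReal (Real.exp (lam * Λ.card))) := by
    rw [ENNReal.ofReal_mul (by positivity), ENNReal.ofReal_mul (by positivity),
      ENNReal.ofReal_mul (by positivity)]
    rw [show (2 : ℝ) * normL lam φ / lam = 2 * (normL lam φ / lam) by ring]
    rw [ENNReal.ofReal_pow (by positivity), ENNReal.ofReal_mul (by norm_num),
      ENNReal.ofReal_ofNat, mul_pow, ENNReal.ofReal_natCast,
      ofReal_norm, enorm_eq_nnnorm]
    ring
  rw [h3]
  calc ∑' Xs : Fin n → Finset (Fin d → ℤ), (‖g Xs‖₊ : ℝ≥0∞)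
      ≤ ∑' Xs : Fin n → Finset (Fin d → ℤ),
          2 ^ n * (‖f‖₊ : ℝ≥0∞) * chainW φ n Λ Xs := ENNReal.tsum_le_tsum hbound
    _ = 2 ^ n * (‖f‖₊ : ℝ≥0∞) * ∑' Xs : Fin n → Finset (Fin d → ℤ), chainW φ n Λ Xs :=
        ENNReal.tsum_mul_left
    _ ≤ _ := by
        gcongr
        exact chainW_comb_bound φ lam hlam hsum hbdd hnorm n Λ

/-- For an interaction with ‖φ‖_λ < ∞ and f localized in a finite region Λ,
the iterated derivation satisfies
‖(D^φ)ⁿ(f)‖ ≤ (2‖φ‖_λ/λ)ⁿ n! e^{λ|Λ|} ‖f‖; in particular the series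
Σ tⁿ(D^φ)ⁿ(f)/n! has radius of convergence at least λ/(2‖φ‖_λ). -/
theorem derivation_iterate_bound [CompleteSpace A]
    (φ : Finset (Fin d → ℤ) → A) (hsa : ∀ X, star (φ X) = φ X)
    (lam : ℝ) (hlam : 0 < lam)
    (hsum : ∀ (x : Fin d → ℤ) (n : ℕ),
      Summable fun X : {X : Finset (Fin d → ℤ) // x ∈ X ∧ X.card = n + 1} => ‖φ X.1‖)
    (hbdd : ∀ n : ℕ, BddAbove (Set.range fun x : Fin d → ℤ =>
      ∑' X : {X : Finset (Fin d → ℤ) // x ∈ X ∧ X.card = n + 1}, ‖φ X.1‖))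
    (hnorm : Summable fun n : ℕ => Real.exp (lam * n) * bnd φ n)
    (Alg : Finset (Fin d → ℤ) → Subalgebra ℂ A)
    (hmono : ∀ X Y, X ⊆ Y → Alg X ≤ Alg Y)
    (hloc : ∀ X, φ X ∈ Alg X)
    (hcomm : ∀ X Y : Finset (Fin d → ℤ), Disjoint X Y →
      ∀ a ∈ Alg X, ∀ b ∈ Alg Y, a * b = b * a)
    (Λ : Finset (Fin d → ℤ)) (f : A) (hf : f ∈ Alg Λ) :
    (∀ n : ℕ, 1 ≤ n →
      ‖Diter φ n f‖ ≤
        (2 * normL lam φ / lam) ^ n * n.factorial * Real.exp (lam * Λ.card) * ‖f‖) ∧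
    (∀ t : ℝ, |t| < lam / (2 * normL lam φ) →
      Summable fun n : ℕ => ‖(t ^ n / (n.factorial : ℝ)) • Diter φ n f‖) := by
  have key := key_bound φ lam hlam hsum hbdd hnorm Alg hmono hloc hcomm Λ f hf
  refine ⟨fun n _ => key n, fun t ht => ?_⟩
  have hK := normL_nonneg φ lam hbdd
  rcases eq_or_lt_of_le hK with hK0 | hKpos
  · exfalso
    rw [← hK0] at ht
    norm_num at ht
    exact absurd (abs_nonneg t) (not_le.mpr ht)
  · set K := normL lam φ with hKdef
    set r := |t| * (2 * K / lam) with hrdef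
    have hr0 : 0 ≤ r := by positivity
    have hr1 : r < 1 := by
      have h2K : 0 < 2 * K / lam := by positivity
      have h := mul_lt_mul_of_pos_right ht h2K
      rwa [show lam / (2*K) * (2*K/lam) = 1 by field_simp] at h
    refine Summable.of_nonneg_of_le (fun n => norm_nonneg _) (fun n => ?_)
      ((summable_geometric_of_lt_one hr0 hr1).mul_right
        (Real.exp (lam * Λ.card) * ‖f‖))
    calc ‖(t ^ n / (n.factorial : ℝ)) • Diter φ n f‖
        = |t ^ n / (n.factorial : ℝ)| * ‖Diter φ n f‖ := by
          rw [norm_smul, Real.norm_eq_abs]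
      _ ≤ |t ^ n / (n.factorial : ℝ)| *
          ((2 * K / lam) ^ n * n.factorial * Real.exp (lam * Λ.card) * ‖f‖) :=
          mul_le_mul_of_nonneg_left (key n) (abs_nonneg _)
      _ = r ^ n * (Real.exp (lam * Λ.card) * ‖f‖) := by
          rw [abs_div, abs_pow, Nat.abs_cast, hrdef, mul_pow]
          have hfac : (n.factorial : ℝ) ≠ 0 := Nat.cast_ne_zero.mpr n.factorial_ne_zero
          field_simp


end Interactions
end
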